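/- If Φ is a self-orthogonal quantum Latin square of dimension d (a d×d array of unit vectors in ℂ^d whose rows and columns are orthonormal bases, and such that the vectors Φ_{i,j} ⊗ Φ_{j,i}* for i,j ∈ [d] form an orthonormal basis of ℂ^d ⊗ ℂ^d), then the diagonal entries {Φ_{i,i} : i ∈ [d]} form an orthonormal basis of ℂ^d. -/

import Mathlib

noncomputable section

/-- The inner product on a complex inner product space, as a function into `ℂ`. -/
def ip {E : Type*} [NormedAddCommGroup E] [InnerProductSpace ℂ E] (x y : E) : ℂ :=
  inner ℂ x y

/-- Entrywise complex conjugation of a vector in `ℂ^ι` (in the standard basis). -/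
def conjE {ι : Type*} [Fintype ι] (v : EuclideanSpace ℂ ι) : EuclideanSpace ℂ ι :=
  WithLp.toLp 2 (fun k => star (v k))

/-- A quantum Latin square of dimension `d`: a `d × d` array of vectors in `ℂ^d`
whose rows and columns are orthonormal bases (orthonormal families of `d` vectors
in the `d`-dimensional space `ℂ^d`). -/
def IsQLS {d : ℕ} (Φ : Fin d → Fin d → EuclideanSpace ℂ (Fin d)) : Prop :=
  (∀ i, Orthonormal ℂ (Φ i)) ∧ (∀ j, Orthonormal ℂ (fun i => Φ i j))

/-- Two `d × d` arrays of vectors are orthogonal quantum Latin squares: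
`⟨Φ_{i,j},Φ_{i',j'}⟩⟨Ψ_{i,j},Ψ_{i',j'}⟩ = δ_{ii'}δ_{jj'}`, i.e. the tensor products
`Φ_{i,j} ⊗ Ψ_{i,j}` form an orthonormal basis of `ℂ^d ⊗ ℂ^d`. -/
def OrthQLS {d : ℕ} (Φ Ψ : Fin d → Fin d → EuclideanSpace ℂ (Fin d)) : Prop :=
  ∀ i j i' j', ip (Φ i j) (Φ i' j') * ip (Ψ i j) (Ψ i' j') =
    if i = i' ∧ j = j' then 1 else 0

/-- A self-orthogonal quantum Latin square: a quantum Latin square that is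
orthogonal to its conjugate transpose, i.e.
`⟨Φ_{i,j},Φ_{i',j'}⟩ ⋅ conj ⟨Φ_{j,i},Φ_{j',i'}⟩ = δ_{ii'}δ_{jj'}`
(the vectors `Φ_{i,j} ⊗ conj (Φ_{j,i})` form an orthonormal basis of `ℂ^d ⊗ ℂ^d`). -/
def IsSOQLS {d : ℕ} (Φ : Fin d → Fin d → EuclideanSpace ℂ (Fin d)) : Prop :=
  IsQLS Φ ∧ OrthQLS Φ (fun i j => conjE (Φ j i))

lemma ip_conjE {ι : Type*} [Fintype ι] (x y : EuclideanSpace ℂ ι) :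
    ip (conjE x) (conjE y) = star (ip x y) := by
  simp [ip, conjE, PiLp.inner_apply, mul_comm]

/-- If `Φ` is a self-orthogonal quantum Latin square of dimension `d`, then its
diagonal entries `{Φ_{i,i} : i ∈ [d]}` form an orthonormal basis of `ℂ^d`. -/
theorem soqls_diagonal_orthonormal_basis {d : ℕ}
    (Φ : Fin d → Fin d → EuclideanSpace ℂ (Fin d)) (h : IsSOQLS Φ) :
    ∃ b : OrthonormalBasis (Fin d) ℂ (EuclideanSpace ℂ (Fin d)), ∀ i, b i = Φ i i := by
  have horth : Orthonormal ℂ (fun i => Φ i i) := by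
    rw [orthonormal_iff_ite]
    intro a b
    by_cases hab : a = b
    · subst hab
      simpa using (orthonormal_iff_ite.mp (h.1.1 a)) a a
    · have := h.2 a a b b
      simp only [ip_conjE, hab, and_self, if_false] at this
      have hz : ip (Φ a a) (Φ b b) = 0 := by
        have h2 : ip (Φ a a) (Φ b b) * (starRingEnd ℂ) (ip (Φ a a) (Φ b b)) = 0 := by
          simpa [Complex.star_def] using this
        rw [Complex.mul_conj] at h2
        exact_mod_cast Complex.normSq_eq_zero.mp (by exact_mod_cast h2)
      simpa [ip, hab] using hz
  have hli := horth.linearIndependent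
  have hcard : Fintype.card (Fin d) = Module.finrank ℂ (EuclideanSpace ℂ (Fin d)) := by
    simp
  have hspan : ⊤ ≤ Submodule.span ℂ (Set.range fun i => Φ i i) :=
    (hli.span_eq_top_of_card_eq_finrank' hcard).ge
  exact ⟨OrthonormalBasis.mk horth hspan, fun i => by simp [OrthonormalBasis.coe_mk]⟩
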